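/- arXiv:2411.08875 — 3 statements merged into one kernel-verified Lean document; each statement's English description precedes it below -/
import Mathlib

section
/- A pixel p is a singleton cause of the classification of x if and only if p belongs to some minimal flipping set; that is, p is a singleton cause if and only if there exists a finite set X of pixels with p ∈ X, such that keep X fails and keep X' holds for every strict subset X' ⊊ X. (This is the paper's claim that the singleton-cause definition coincides with being part of an actual cause in the modified Halpern–Pearl sense, in the induced depth-2 binary causal model with independent pixel variables.) -/
/-- The image obtained from `x` by setting the value of every pixel in `S`
to the masking value `m`, and keeping the value of `x` off `S`. -/
def mask {Pixel Val : Type*} [DecidableEq Pixel]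
    (x : Pixel → Val) (m : Val) (S : Finset Pixel) : Pixel → Val :=
  fun p => if p ∈ S then m else x p

/-- `keep f x m S` holds if masking the pixels in `S` does not change the
classification of `x` by `f`. -/
def keep {Pixel Val Label : Type*} [DecidableEq Pixel]
    (f : (Pixel → Val) → Label) (x : Pixel → Val) (m : Val) (S : Finset Pixel) : Prop :=
  f (mask x m S) = f x

private lemma exists_minimal_failing {Pixel Val Label : Type*} [DecidableEq Pixel]
    (f : (Pixel → Val) → Label) (x : Pixel → Val) (m : Val) :
    ∀ S : Finset Pixel, ¬ keep f x m S →
      ∃ X ⊆ S, ¬ keep f x m X ∧ ∀ X' ⊂ X, keep f x m X' := by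
  intro S
  induction S using Finset.strongInductionOn with
  | _ S ih =>
    intro hS
    by_cases h : ∀ X' ⊂ S, keep f x m X'
    · exact ⟨S, subset_rfl, hS, h⟩
    · push_neg at h
      obtain ⟨X', hX'S, hX'⟩ := h
      obtain ⟨X, hXs, hX⟩ := ih X' hX'S hX'
      exact ⟨X, hXs.trans hX'S.subset, hX⟩

/-- A pixel `p` is a singleton cause of the classification of `x` iff it belongs
to some minimal flipping set. -/
theorem singleton_cause_iff_mem_minimal_flipping_set
    {Pixel Val Label : Type*} [Fintype Pixel] [DecidableEq Pixel]
    (f : (Pixel → Val) → Label) (x : Pixel → Val) (m : Val) (p : Pixel) :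
    (∃ P : Finset Pixel, p ∉ P ∧ (∀ P' ⊆ P, keep f x m P') ∧ ¬ keep f x m (P ∪ {p}))
      ↔
    (∃ X : Finset Pixel, p ∈ X ∧ ¬ keep f x m X ∧ ∀ X' ⊂ X, keep f x m X') := by
  constructor
  · rintro ⟨P, hpP, hkeep, hfail⟩
    obtain ⟨X, hXs, hXfail, hXmin⟩ := exists_minimal_failing f x m _ hfail
    refine ⟨X, ?_, hXfail, hXmin⟩
    by_contra hp
    have : X ⊆ P := by
      intro q hq
      rcases Finset.mem_union.mp (hXs hq) with h | h
      · exact h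
      · exact absurd (Finset.mem_singleton.mp h ▸ hq) hp
    exact hXfail (hkeep X this)
  · rintro ⟨X, hpX, hXfail, hXmin⟩
    refine ⟨X \ {p}, by simp, ?_, ?_⟩
    · intro P' hP'
      apply hXmin
      refine Finset.ssubset_iff_of_subset (fun q hq => (Finset.mem_sdiff.mp (hP' hq)).1) |>.mpr ?_
      exact ⟨p, hpX, fun h => (Finset.mem_sdiff.mp (hP' h)).2 (Finset.mem_singleton_self p)⟩
    · rwa [Finset.sdiff_union_self_eq_union, Finset.union_eq_left.mpr (Finset.singleton_subset_iff.mpr hpX)]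
end

section
/- If X is a minimal flipping set and p ∈ X, then p is a singleton cause of the classification of x with witness P = X \ {p}; that is, p ∉ X \ {p}, keep P' holds for every subset P' ⊆ X \ {p}, and keep ((X \ {p}) ∪ {p}) fails. -/
/-- If `X` is a minimal flipping set and `p ∈ X`, then `p` is a singleton cause
of the classification of `x` with witness `P = X \ {p}`. -/
theorem mem_minimal_flipping_set_singleton_cause
    {Pixel Val Label : Type*} [Fintype Pixel] [DecidableEq Pixel]
    (f : (Pixel → Val) → Label) (x : Pixel → Val) (m : Val) (p : Pixel)
    (X : Finset Pixel)
    (hflip : ¬ keep f x m X) (hmin : ∀ X' ⊂ X, keep f x m X')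
    (hp : p ∈ X) :
    p ∉ X \ {p} ∧ (∀ P' ⊆ X \ {p}, keep f x m P') ∧
      ¬ keep f x m ((X \ {p}) ∪ {p}) := by
  refine ⟨by simp, ?_, ?_⟩
  · intro P' hP'
    apply hmin
    refine lt_of_le_of_lt hP' ⟨Finset.sdiff_subset, fun h => by simpa using h hp⟩
  · have : (X \ {p}) ∪ {p} = X := by
      rw [Finset.sdiff_union_self_eq_union, Finset.union_eq_left.2 (Finset.singleton_subset_iff.2 hp)]
    rwa [this]
end

section
/- If p is a singleton cause of the classification of x with witness P, then there exists a minimal flipping set X with p ∈ X and X ⊆ P ∪ {p}; that is, keep X fails, keep X' holds for every strict subset X' ⊊ X, and X contains p. -/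
/-- If `p` is a singleton cause of the classification of `x` with witness `P`,
then there is a minimal flipping set `X` with `p ∈ X` and `X ⊆ P ∪ {p}`. -/
theorem singleton_cause_exists_minimal_flipping_set
    {Pixel Val Label : Type*} [Fintype Pixel] [DecidableEq Pixel]
    (f : (Pixel → Val) → Label) (x : Pixel → Val) (m : Val) (p : Pixel)
    (P : Finset Pixel)
    (hSC1 : p ∉ P) (hSC2 : ∀ P' ⊆ P, keep f x m P')
    (hSC3 : ¬ keep f x m (P ∪ {p})) :
    ∃ X : Finset Pixel, ¬ keep f x m X ∧ (∀ X' ⊂ X, keep f x m X') ∧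
      p ∈ X ∧ X ⊆ P ∪ {p} := by
  classical
  let S : Finset (Finset Pixel) :=
    (P ∪ {p}).powerset.filter (fun X => ¬ keep f x m X)
  have hne : S.Nonempty := ⟨P ∪ {p}, Finset.mem_filter.2 ⟨Finset.mem_powerset.2 (le_refl _), hSC3⟩⟩
  obtain ⟨X, hXS, hmin⟩ := S.exists_min_image Finset.card hne
  simp only [S, Finset.mem_filter, Finset.mem_powerset] at hXS
  obtain ⟨hXsub, hXnk⟩ := hXS
  have hmin' : ∀ X' ⊂ X, keep f x m X' := by
    intro X' hX'
    by_contra h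
    have hX'S : X' ∈ S := by
      simp only [S, Finset.mem_filter, Finset.mem_powerset]
      exact ⟨hX'.subset.trans hXsub, h⟩
    have := hmin X' hX'S
    exact absurd (Finset.card_lt_card hX') (not_lt.2 this)
  refine ⟨X, hXnk, hmin', ?_, hXsub⟩
  by_contra hp
  have : X ⊆ P := by
    intro q hq
    rcases Finset.mem_union.1 (hXsub hq) with h | h
    · exact h
    · exact absurd (Finset.mem_singleton.1 h ▸ hq) hp
  exact hXnk (hSC2 X this)
end
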